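/- Let A be an ℕ-graded commutative ring and let a, b ∈ A_1 be homogeneous elements of degree 1. Then there is a ring isomorphism between the localization of A[a⁻¹]_0 at the element b/a and the degree-0 part A[(ab)⁻¹]_0 of the localization of A at ab. -/

import Mathlib

open HomogeneousLocalization in
/-- for an ℕ-graded commutative ring `A` (ℤ-graded with vanishing negative part)
and degree-one elements `a, b ∈ A₁`, the localization of the degree-zero ring `A[a⁻¹]₀` at the
degree-zero element `b/a` is ring-isomorphic to the degree-zero part `A[(ab)⁻¹]₀`. -/
theorem stmt1 {A : Type*} [CommRing A] (𝒜 : ℤ → Submodule ℤ A) [GradedAlgebra 𝒜]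
    (hA : ∀ n : ℤ, n < 0 → 𝒜 n = ⊥) (a b : A) (ha : a ∈ 𝒜 1) (hb : b ∈ 𝒜 1) :
    Nonempty
      (Localization.Away
          (HomogeneousLocalization.mk ⟨1, ⟨b, hb⟩, ⟨a, ha⟩, Submonoid.mem_powers a⟩ :
            HomogeneousLocalization.Away 𝒜 a) ≃+*
        HomogeneousLocalization.Away 𝒜 (a * b)) := by
  classical
  set t : HomogeneousLocalization.Away 𝒜 a :=
    HomogeneousLocalization.mk ⟨1, ⟨b, hb⟩, ⟨a, ha⟩, Submonoid.mem_powers a⟩ with ht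
  have hab : a * b ∈ 𝒜 (1 + 1) := SetLike.mul_mem_graded ha hb
  set φ : HomogeneousLocalization.Away 𝒜 a →+* HomogeneousLocalization.Away 𝒜 (a * b) :=
    awayMap 𝒜 hb rfl with hφ
  have ht' : t = HomogeneousLocalization.mk
      (⟨1, ⟨b, hb⟩, ⟨a ^ 1, by simpa using ha⟩, ⟨1, rfl⟩⟩ :
        HomogeneousLocalization.NumDenSameDeg 𝒜 (Submonoid.powers a)) := by
    apply val_injective
    rw [ht, val_mk, val_mk]
    congr 1
    exact Subtype.ext (pow_one a).symm
  have hφt : (φ t).val = Localization.mk (b * b ^ 1) (⟨(a * b) ^ 1, ⟨1, rfl⟩⟩ : Submonoid.powers (a * b)) := by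
    rw [ht', hφ, val_awayMap_mk 𝒜 hb rfl]
  have hunit : IsUnit (φ t) := by
    refine IsUnit.of_mul_eq_one
      (HomogeneousLocalization.mk
        ⟨1 + 1, ⟨a * a, SetLike.mul_mem_graded ha ha⟩, ⟨a * b, hab⟩, Submonoid.mem_powers _⟩) ?_
    apply val_injective
    rw [val_mul, hφt, val_mk, val_one, Localization.mk_mul, ← Localization.mk_one,
      Localization.mk_eq_mk_iff, Localization.r_iff_exists]
    exact ⟨1, by simp; ring⟩
  letI : Algebra (HomogeneousLocalization.Away 𝒜 a)
      (HomogeneousLocalization.Away 𝒜 (a * b)) := φ.toAlgebra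
  haveI : IsLocalization.Away t (HomogeneousLocalization.Away 𝒜 (a * b)) := by
    refine ⟨?_, ?_, ?_⟩
    · rintro ⟨y, k, rfl⟩
      simpa [RingHom.algebraMap_toAlgebra, map_pow] using hunit.pow k
    · intro z
      obtain ⟨⟨n, ⟨r, hr⟩, ⟨s, hs⟩, i, (rfl : _ = s)⟩, rfl⟩ := mk_surjective z
      by_cases h0 : (a * b) ^ i = 0
      · haveI := HomogeneousLocalization.subsingleton 𝒜
          (x := Submonoid.powers (a * b)) ⟨i, h0⟩
        exact ⟨⟨0, 1⟩, Subsingleton.elim _ _⟩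
      · have hn : n = i • ((1 : ℤ) + 1) :=
          DirectSum.degree_eq_of_mem_mem 𝒜 hs (SetLike.pow_mem_graded i hab) h0
        have hmem : a ^ (2 * i) ∈ 𝒜 n := by
          have h2 : ((2 * i : ℕ) • (1 : ℤ)) = n := by
            rw [hn]; simp [nsmul_eq_mul]; push_cast; ring
          exact h2 ▸ SetLike.pow_mem_graded _ ha
        refine ⟨⟨HomogeneousLocalization.mk ⟨n, ⟨r, hr⟩, ⟨a ^ (2 * i), hmem⟩, ⟨2 * i, rfl⟩⟩,
          ⟨t ^ i, i, rfl⟩⟩, ?_⟩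
        apply val_injective
        rw [RingHom.algebraMap_toAlgebra]
        show (_ * φ (t ^ i)).val = (φ _).val
        rw [map_pow, val_mul, val_pow, hφt, val_mk, hφ, val_awayMap_mk 𝒜 hb rfl,
          Localization.mk_pow, Localization.mk_mul, Localization.mk_eq_mk_iff,
          Localization.r_iff_exists]
        refine ⟨1, ?_⟩
        simp only [OneMemClass.coe_one, one_mul, SubmonoidClass.coe_pow, Submonoid.coe_mul]
        ring
    · intro z₁ z₂ h
      obtain ⟨⟨n₁, ⟨c₁, hc₁⟩, ⟨d₁, hd₁⟩, j₁, (rfl : _ = d₁)⟩, rfl⟩ := mk_surjective z₁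
      obtain ⟨⟨n₂, ⟨c₂, hc₂⟩, ⟨d₂, hd₂⟩, j₂, (rfl : _ = d₂)⟩, rfl⟩ := mk_surjective z₂
      rw [RingHom.algebraMap_toAlgebra] at h
      have h' := congrArg HomogeneousLocalization.val h
      rw [hφ, val_awayMap_mk 𝒜 hb rfl, val_awayMap_mk 𝒜 hb rfl,
        Localization.mk_eq_mk_iff, Localization.r_iff_exists] at h'
      obtain ⟨⟨u, k, rfl⟩, hu⟩ := h'
      refine ⟨⟨t ^ (k + j₁ + j₂), ⟨k + j₁ + j₂, rfl⟩⟩, ?_⟩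
      apply val_injective
      rw [val_mul, val_mul, val_pow, ht, val_mk, val_mk, val_mk,
        Localization.mk_pow, Localization.mk_mul, Localization.mk_mul,
        Localization.mk_eq_mk_iff, Localization.r_iff_exists]
      refine ⟨⟨a ^ k, k, rfl⟩, ?_⟩
      simp only [SubmonoidClass.coe_pow, Submonoid.coe_mul] at hu ⊢
      linear_combination (a ^ (k + j₁ + j₂)) * hu
  exact ⟨(IsLocalization.algEquiv (Submonoid.powers t) (Localization.Away t)
    (HomogeneousLocalization.Away 𝒜 (a * b))).toRingEquiv⟩
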